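/- If N' is obtained from a level-1 network N on X by a blow-up operation on an interior vertex u of degree k ≥ 3 not contained in any cycle of N, then N' is a level-1 network on X whose number of cycles exceeds that of N by exactly one. -/

import Mathlib

/- Blowing up a cycle-free interior vertex of a level-1 network yields a
   level-1 network with exactly one more cycle. -/

variable {X : Type*} [Fintype X] [DecidableEq X]

/-- Level-1 property: any two cycles meeting in a vertex have the same vertex
    set (every maximal cut-edge-free subgraph is a vertex or a cycle). -/
def Level1Prop {V : Type*} (G : SimpleGraph V) : Prop :=
  ∀ ⦃u : V⦄ (c : G.Walk u u), c.IsCycle → ∀ ⦃w : V⦄ (c' : G.Walk w w),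
    c'.IsCycle → (∃ v, v ∈ c.support ∧ v ∈ c'.support) →
      ∀ v, v ∈ c.support ↔ v ∈ c'.support

/-- A (not necessarily binary) level-1 phylogenetic network on X. -/
structure Lvl1Net (X : Type*) where
  V : Type*
  [fV : Fintype V]
  [dV : DecidableEq V]
  G : SimpleGraph V
  conn : G.Connected
  leaf : X ↪ V
  deg_leaf : ∀ x : X, (G.neighborSet (leaf x)).ncard = 1
  leaf_of_deg : ∀ v : V, (G.neighborSet v).ncard = 1 → ∃ x, leaf x = v
  deg_ge : ∀ v : V, (G.neighborSet v).ncard = 1 ∨ 3 ≤ (G.neighborSet v).ncard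
  level1 : Level1Prop G

attribute [instance] Lvl1Net.fV Lvl1Net.dV

/-- The blow-up of N at the vertex u whose neighbours are enumerated in the
    circular order vs : Fin k → V: the vertex u is replaced by a k-cycle
    u_0, …, u_{k-1}, with u_i joined to vs i. -/
def blowUp (N : Lvl1Net X) (u : N.V) (k : ℕ) (vs : Fin k → N.V) :
    SimpleGraph ({w : N.V // w ≠ u} ⊕ Fin k) :=
  SimpleGraph.fromRel (fun p q =>
    (∃ x y : {w : N.V // w ≠ u}, p = Sum.inl x ∧ q = Sum.inl y ∧
      N.G.Adj x.1 y.1) ∨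
    (∃ (x : {w : N.V // w ≠ u}) (i : Fin k), p = Sum.inl x ∧ q = Sum.inr i ∧
      x.1 = vs i) ∨
    (∃ i : Fin k, p = Sum.inr i ∧
      q = Sum.inr ⟨(i.1 + 1) % k, Nat.mod_lt _ (Nat.lt_of_le_of_lt (Nat.zero_le _) i.isLt)⟩))

namespace BUAux
set_option linter.unusedSectionVars false

variable (N : Lvl1Net X) (u : N.V) {k : ℕ} (vs : Fin k → N.V)

lemma adj_inl_inl (x y : {w : N.V // w ≠ u}) :
    (blowUp N u k vs).Adj (Sum.inl x) (Sum.inl y) ↔ N.G.Adj x.1 y.1 := by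
  constructor
  · rintro ⟨hne, h | h⟩ <;>
      rcases h with ⟨a, b, ha, hb, hab⟩ | ⟨a, i, ha, hb, _⟩ | ⟨i, ha, hb⟩ <;>
      simp_all [SimpleGraph.adj_comm]
  · intro h
    exact ⟨fun hxy => h.ne (by injection hxy with h'; rw [h']),
      Or.inl (Or.inl ⟨x, y, rfl, rfl, h⟩)⟩

lemma adj_inl_inr (x : {w : N.V // w ≠ u}) (i : Fin k) :
    (blowUp N u k vs).Adj (Sum.inl x) (Sum.inr i) ↔ x.1 = vs i := by
  constructor
  · rintro ⟨hne, h | h⟩ <;>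
      rcases h with ⟨a, b, ha, hb, hab⟩ | ⟨a, j, ha, hb, hj⟩ | ⟨j, ha, hb⟩ <;>
      simp_all
  · intro h
    exact ⟨by simp, Or.inl (Or.inr (Or.inl ⟨x, i, rfl, rfl, h⟩))⟩

lemma adj_inr_inr (hk : 3 ≤ k) (i j : Fin k) :
    (blowUp N u k vs).Adj (Sum.inr i) (Sum.inr j) ↔
      (j.1 = (i.1 + 1) % k ∨ i.1 = (j.1 + 1) % k) := by
  constructor
  · rintro ⟨hne, h | h⟩ <;>
      rcases h with ⟨a, b, ha, hb, hab⟩ | ⟨a, j', ha, hb, hj⟩ | ⟨j', ha, hb⟩ <;>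
      simp_all [Fin.ext_iff]
  · intro h
    have key : ∀ i : Fin k, (i.1 : ℕ) ≠ (i.1 + 1) % k := by
      intro i hi
      have hlt := i.isLt
      rcases eq_or_lt_of_le (Nat.succ_le_of_lt hlt) with he | hl
      · have : (i.1 + 1) % k = 0 := by rw [show i.1 + 1 = k from he, Nat.mod_self]
        omega
      · rw [Nat.mod_eq_of_lt hl] at hi; omega
    have hij : i ≠ j := by
      rintro rfl
      rcases h with h | h <;> exact key i h
    rcases h with h | h
    · exact ⟨by simpa using hij, Or.inl (Or.inr (Or.inr ⟨i, rfl, by simp [Fin.ext_iff, h]⟩))⟩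
    · exact ⟨by simpa using hij, Or.inr (Or.inr (Or.inr ⟨j, rfl, by simp [Fin.ext_iff, h]⟩))⟩


/-- projection back to `N.V` -/
def pr : ({w : N.V // w ≠ u} ⊕ Fin k) → N.V := Sum.elim Subtype.val (fun _ => u)

variable (hnb : ∀ w : N.V, N.G.Adj u w ↔ ∃ i, vs i = w)

def vs' (i : Fin k) : {w : N.V // w ≠ u} :=
  ⟨vs i, by intro h; exact N.G.loopless.irrefl u (h ▸ (hnb (vs i)).2 ⟨i, rfl⟩)⟩

lemma no_upath (hnb : ∀ w : N.V, N.G.Adj u w ↔ ∃ i, vs i = w) (hinj : Function.Injective vs)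
    (hnocyc : ∀ ⦃w : N.V⦄ (c : N.G.Walk w w), c.IsCycle → u ∉ c.support)
    {j1 j2 : Fin k} (hne : j1 ≠ j2) (q : N.G.Walk (vs j1) (vs j2))
    (hq : q.IsPath) (hu : u ∉ q.support) : False := by
  have h1 : N.G.Adj u (vs j1) := (hnb _).2 ⟨j1, rfl⟩
  have h2 : N.G.Adj (vs j2) u := ((hnb _).2 ⟨j2, rfl⟩).symm
  have hepath : (q.concat h2).IsPath := by
    rw [SimpleGraph.Walk.isPath_def, SimpleGraph.Walk.support_concat]
    rw [SimpleGraph.Walk.isPath_def] at hq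
    simp only [List.concat_eq_append, List.nodup_append, List.nodup_cons]
    exact ⟨hq, by simp, by
      intro a ha b hb hab; simp at hb; exact hu (by rw [← hb, ← hab]; exact ha)⟩
  have hcyc : (SimpleGraph.Walk.cons h1 (q.concat h2)).IsCycle := by
    rw [SimpleGraph.Walk.cons_isCycle_iff]
    refine ⟨hepath, ?_⟩
    rw [SimpleGraph.Walk.edges_concat]
    simp only [List.concat_eq_append, List.mem_append, List.mem_singleton]
    rintro (hmem | hmem)
    · exact hu (SimpleGraph.Walk.fst_mem_support_of_mem_edges q hmem)
    · rw [Sym2.eq_iff] at hmem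
      rcases hmem with ⟨h1', h2'⟩ | ⟨h1', h2'⟩
      · exact N.G.loopless.irrefl u (h2' ▸ h1)
      · exact hne (hinj h2')
  exact hnocyc _ hcyc (by simp)

lemma lift_down : ∀ {a b : {w : N.V // w ≠ u} ⊕ Fin k} (p : (blowUp N u k vs).Walk a b)
    (_ : ∀ v ∈ p.support, ∃ z : {w : N.V // w ≠ u}, v = Sum.inl z),
    ∃ q : N.G.Walk (pr N u a) (pr N u b),
      q.support = p.support.map (pr N u) ∧
      q.edges = p.edges.map (Sym2.map (pr N u)) := by
  intro a b p
  induction p with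
  | nil => exact fun _ => ⟨SimpleGraph.Walk.nil, by simp [pr], by simp⟩
  | @cons a b0 c h p ih =>
    intro hall
    obtain ⟨x, rfl⟩ := hall a (by simp)
    obtain ⟨y, rfl⟩ := hall b0 (by simp)
    obtain ⟨q, hs, he⟩ := ih (fun v hv => hall v (by simp [hv]))
    have hadj : N.G.Adj x.1 y.1 := (adj_inl_inl N u vs x y).1 h
    exact ⟨SimpleGraph.Walk.cons
      (show N.G.Adj (pr N u (Sum.inl x)) (pr N u (Sum.inl y)) from hadj) q, by rw [SimpleGraph.Walk.support_cons, hs]; rfl,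
      by rw [SimpleGraph.Walk.edges_cons, he]; rfl⟩

lemma pr_injOn {a b : {w : N.V // w ≠ u} ⊕ Fin k} (ha : ∃ z, a = Sum.inl z)
    (hb : ∃ z, b = Sum.inl z) (h : pr N u a = pr N u b) : a = b := by
  obtain ⟨za, rfl⟩ := ha; obtain ⟨zb, rfl⟩ := hb
  simp only [pr, Sum.elim_inl] at h
  exact congrArg Sum.inl (Subtype.ext h)

lemma pr_map_nodup {l : List ({w : N.V // w ≠ u} ⊕ Fin k)}
    (hall : ∀ v ∈ l, ∃ z, v = Sum.inl z) (h : l.Nodup) : (l.map (pr N u)).Nodup :=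
  h.map_on (fun a ha b hb hab => pr_injOn N u ⟨(hall a ha).choose, (hall a ha).choose_spec⟩
    ⟨(hall b hb).choose, (hall b hb).choose_spec⟩ hab)

lemma u_not_mem_pr_map {l : List ({w : N.V // w ≠ u} ⊕ Fin k)}
    (hall : ∀ v ∈ l, ∃ z, v = Sum.inl z) : u ∉ l.map (pr N u) := by
  intro hu
  obtain ⟨v, hv, hpv⟩ := List.mem_map.1 hu
  obtain ⟨z, rfl⟩ := hall v hv
  exact z.2 hpv

lemma pr_edges_injOn {a b : {w : N.V // w ≠ u} ⊕ Fin k}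
    (p : (blowUp N u k vs).Walk a b)
    (hall : ∀ v ∈ p.support, ∃ z, v = Sum.inl z) :
    ∀ e1 ∈ p.edges, ∀ e2 ∈ p.edges,
      Sym2.map (pr N u) e1 = Sym2.map (pr N u) e2 → e1 = e2 := by
  intro e1 he1 e2 he2 heq
  induction e1 with
  | h a1 b1 =>
  induction e2 with
  | h a2 b2 =>
  have ha1 := hall _ (SimpleGraph.Walk.fst_mem_support_of_mem_edges p he1)
  have hb1 := hall _ (SimpleGraph.Walk.snd_mem_support_of_mem_edges p he1)
  have ha2 := hall _ (SimpleGraph.Walk.fst_mem_support_of_mem_edges p he2)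
  have hb2 := hall _ (SimpleGraph.Walk.snd_mem_support_of_mem_edges p he2)
  simp only [Sym2.map_pair_eq, Sym2.eq_iff] at heq ⊢
  rcases heq with ⟨h1, h2⟩ | ⟨h1, h2⟩
  · exact Or.inl ⟨pr_injOn N u ha1 ha2 h1, pr_injOn N u hb1 hb2 h2⟩
  · exact Or.inr ⟨pr_injOn N u ha1 hb2 h1, pr_injOn N u hb1 ha2 h2⟩

lemma lift_path {x y : {w : N.V // w ≠ u}}
    (p : (blowUp N u k vs).Walk (Sum.inl x) (Sum.inl y)) (hp : p.IsPath)
    (hall : ∀ v ∈ p.support, ∃ z, v = Sum.inl z) :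
    ∃ q : N.G.Walk x.1 y.1, q.IsPath ∧ u ∉ q.support := by
  obtain ⟨q, hs, _⟩ := lift_down N u vs p hall
  refine ⟨q, ?_, ?_⟩
  · exact (SimpleGraph.Walk.isPath_def q).2
      (by rw [hs]; exact pr_map_nodup N u hall hp.support_nodup)
  · exact fun h => u_not_mem_pr_map N u hall (by rw [← hs]; exact h)

lemma lift_cycle {x : {w : N.V // w ≠ u}}
    (c : (blowUp N u k vs).Walk (Sum.inl x) (Sum.inl x)) (hc : c.IsCycle)
    (hall : ∀ v ∈ c.support, ∃ z, v = Sum.inl z) :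
    ∃ q : N.G.Walk x.1 x.1, q.IsCycle ∧ q.support = c.support.map (pr N u) := by
  obtain ⟨q, hs, he⟩ := lift_down N u vs c hall
  refine ⟨q, ?_, hs⟩
  refine (SimpleGraph.Walk.isCycle_def q).2 ⟨?_, ?_, ?_⟩
  · rw [SimpleGraph.Walk.isTrail_def, he]
    exact hc.isTrail.edges_nodup.map_on (pr_edges_injOn N u vs c hall)
  · intro hqnil
    have h3 := hc.three_le_length
    have : q.length = c.length := by
      have := congrArg List.length hs
      simpa [SimpleGraph.Walk.length_support] using this
    rw [hqnil] at this
    simp at this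
    omega
  · have : q.support.tail = c.support.tail.map (pr N u) := by
      rw [hs]
      cases c.support with
      | nil => simp
      | cons hd tl => simp
    rw [this]
    exact pr_map_nodup N u (fun v hv => hall v (List.mem_of_mem_tail hv)) hc.2

lemma crossing : ∀ (n : ℕ) {i : Fin k} {y : {w : N.V // w ≠ u}}
    (p : (blowUp N u k vs).Walk (Sum.inr i) (Sum.inl y)),
    p.length ≤ n → p.IsPath →
    ∃ (j : Fin k) (q : N.G.Walk (vs j) y.1), q.IsPath ∧ u ∉ q.support ∧
      s(Sum.inl (vs' N u vs hnb j), Sum.inr j) ∈ p.edges := by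
  classical
  intro n
  induction n with
  | zero =>
    intro i y p hlen hp
    have := SimpleGraph.Walk.eq_of_length_eq_zero (Nat.le_zero.1 hlen)
    simp at this
  | succ n ih =>
    intro i y p hlen hp
    cases p with
    | cons h p' =>
      rename_i b
      have hp' : p'.IsPath := hp.of_cons
      cases b with
      | inl x =>
        have hz : x.1 = vs i := (adj_inl_inr N u vs x i).1 h.symm
        rcases Classical.em (∀ v ∈ p'.support, ∃ z : {w : N.V // w ≠ u}, v = (Sum.inl z : {w : N.V // w ≠ u} ⊕ Fin k)) with hall | hall
        · obtain ⟨q, hq, hu⟩ := lift_path N u vs p' hp' hall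
          refine ⟨i, q.copy hz rfl, by simpa using hq, by simpa using hu, ?_⟩
          have hx : Sum.inl x = (Sum.inl (vs' N u vs hnb i) : {w : N.V // w ≠ u} ⊕ Fin k) :=
            congrArg Sum.inl (Subtype.ext hz)
          rw [SimpleGraph.Walk.edges_cons]
          exact List.mem_cons.2 (Or.inl (by rw [← hx, Sym2.eq_swap]))
        · push_neg at hall
          obtain ⟨v, hv, hvne⟩ := hall
          cases v with
          | inl z => exact absurd rfl (hvne z)
          | inr i'' =>
            obtain ⟨j, q, hq, hu, he⟩ := ih (p'.dropUntil (Sum.inr i'') hv)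
              (le_trans (SimpleGraph.Walk.length_dropUntil_le p' hv)
                (by simpa using Nat.succ_le_succ_iff.1 hlen))
              (hp'.dropUntil hv)
            exact ⟨j, q, hq, hu, by
              rw [SimpleGraph.Walk.edges_cons]
              exact List.mem_cons_of_mem _ (SimpleGraph.Walk.edges_dropUntil_subset p' hv he)⟩
      | inr i' =>
        obtain ⟨j, q, hq, hu, he⟩ := ih p' (Nat.succ_le_succ_iff.1 hlen) hp'
        exact ⟨j, q, hq, hu, by
          rw [SimpleGraph.Walk.edges_cons]
          exact List.mem_cons_of_mem _ he⟩

lemma mem_support_rotate_iff {V : Type*} [DecidableEq V] {G : SimpleGraph V} {v x : V}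
    (c : G.Walk v v) (h : x ∈ c.support) (w : V) :
    w ∈ (c.rotate x h).support ↔ w ∈ c.support := by
  unfold SimpleGraph.Walk.rotate
  rw [SimpleGraph.Walk.mem_support_append_iff, or_comm,
    ← SimpleGraph.Walk.mem_support_append_iff, SimpleGraph.Walk.take_spec]

include hnb in
lemma no_mixed_cycle (hinj : Function.Injective vs)
    (hnocyc : ∀ ⦃w : N.V⦄ (c : N.G.Walk w w), c.IsCycle → u ∉ c.support)
    {a0 : {w : N.V // w ≠ u} ⊕ Fin k} (c : (blowUp N u k vs).Walk a0 a0) (hc : c.IsCycle)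
    {x : {w : N.V // w ≠ u}} (hx : Sum.inl x ∈ c.support)
    {i0 : Fin k} (hi : Sum.inr i0 ∈ c.support) : False := by
  classical
  obtain ⟨c', hc', hx'⟩ :
      ∃ c' : (blowUp N u k vs).Walk (Sum.inr i0) (Sum.inr i0),
        c'.IsCycle ∧ Sum.inl x ∈ c'.support :=
    ⟨c.rotate _ hi, hc.rotate hi, (mem_support_rotate_iff c hi _).2 hx⟩
  cases c' with
  | nil => exact hc'.ne_nil rfl
  | cons h t =>
    rename_i b
    rw [SimpleGraph.Walk.cons_isCycle_iff] at hc'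
    obtain ⟨ht, hes⟩ := hc'
    rw [SimpleGraph.Walk.support_cons] at hx'
    have hxt : Sum.inl x ∈ t.support := by
      rcases List.mem_cons.1 hx' with h' | h'
      · simp at h'
      · exact h'
    have hts : (t.takeUntil _ hxt).append (t.dropUntil _ hxt) = t := t.take_spec hxt
    have ht1 : (t.takeUntil _ hxt).IsPath := ht.takeUntil hxt
    have ht2 : (t.dropUntil _ hxt).IsPath := ht.dropUntil hxt
    have hst : t.support = (t.takeUntil _ hxt).support ++ (t.dropUntil _ hxt).support.tail := by
      have h' := (congrArg SimpleGraph.Walk.support hts).symm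
      rwa [SimpleGraph.Walk.support_append] at h'
    have hte : t.edges = (t.takeUntil _ hxt).edges ++ (t.dropUntil _ hxt).edges := by
      have h' := (congrArg SimpleGraph.Walk.edges hts).symm
      rwa [SimpleGraph.Walk.edges_append] at h'
    have hnd := ht.support_nodup
    rw [hst] at hnd
    have hdisj := List.disjoint_of_nodup_append hnd
    have hi0t2 : Sum.inr i0 ∈ (t.dropUntil _ hxt).support.tail := by
      have he2 : Sum.inr i0 ∈ (t.dropUntil _ hxt).support :=
        SimpleGraph.Walk.end_mem_support _
      rw [SimpleGraph.Walk.support_eq_cons] at he2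
      rcases List.mem_cons.1 he2 with h' | h'
      · simp at h'
      · exact h'
    have hni : Sum.inr i0 ∉ (t.takeUntil _ hxt).support := fun hmem => hdisj hmem hi0t2
    have hw1 : (SimpleGraph.Walk.cons h (t.takeUntil _ hxt)).IsPath :=
      (SimpleGraph.Walk.cons_isPath_iff _ _).2 ⟨ht1, hni⟩
    obtain ⟨j1, q1, hq1, hu1, he1⟩ :=
      crossing N u vs hnb _ (SimpleGraph.Walk.cons h (t.takeUntil _ hxt)) le_rfl hw1
    obtain ⟨j2, q2, hq2, hu2, he2⟩ :=
      crossing N u vs hnb _ (t.dropUntil _ hxt).reverse le_rfl ht2.reverse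
    have he2' : s(Sum.inl (vs' N u vs hnb j2), Sum.inr j2) ∈ (t.dropUntil _ hxt).edges := by
      rw [SimpleGraph.Walk.edges_reverse] at he2
      exact List.mem_reverse.1 he2
    have hjne : j1 ≠ j2 := by
      rintro rfl
      rw [SimpleGraph.Walk.edges_cons] at he1
      rcases List.mem_cons.1 he1 with heq | he1'
      · refine hes ?_
        rw [hte]
        exact List.mem_append_right _ (heq ▸ he2')
      · have hnd2 := ht.isTrail.edges_nodup
        rw [hte] at hnd2
        exact List.disjoint_of_nodup_append hnd2 he1' he2'
    have hu' : u ∉ (q1.append q2.reverse).support := by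
      rw [SimpleGraph.Walk.mem_support_append_iff]
      rintro (hm | hm)
      · exact hu1 hm
      · rw [SimpleGraph.Walk.support_reverse] at hm
        exact hu2 (List.mem_reverse.1 hm)
    exact no_upath N u vs hnb hinj hnocyc hjne (q1.append q2.reverse).toPath.1
      (q1.append q2.reverse).toPath.2
      (fun hm => hu' (SimpleGraph.Walk.support_toPath_subset _ hm))

section Arith
variable {k : ℕ}

lemma succ_mod_inj (hk : 1 ≤ k) {a b : ℕ} (ha : a < k) (hb : b < k)
    (h : (a + 1) % k = (b + 1) % k) : a = b := by
  rcases Nat.lt_or_ge (a + 1) k with h1 | h1 <;> rcases Nat.lt_or_ge (b + 1) k with h2 | h2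
  · rw [Nat.mod_eq_of_lt h1, Nat.mod_eq_of_lt h2] at h; omega
  · rw [Nat.mod_eq_of_lt h1] at h
    have hb2 : b + 1 = k := by omega
    rw [hb2, Nat.mod_self] at h; omega
  · rw [Nat.mod_eq_of_lt h2] at h
    have ha2 : a + 1 = k := by omega
    rw [ha2, Nat.mod_self] at h; omega
  · omega

lemma pred_iff (hk : 3 ≤ k) {a b : ℕ} (ha : a < k) (hb : b < k) :
    a = (b + 1) % k ↔ b = (a + (k - 1)) % k := by
  have key1 : ∀ c < k, ((c + 1) % k + (k - 1)) % k = c := by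
    intro c hc
    rw [Nat.mod_add_mod, show c + 1 + (k - 1) = c + k by omega, Nat.add_mod_right,
      Nat.mod_eq_of_lt hc]
  have key2 : ∀ c < k, ((c + (k - 1)) % k + 1) % k = c := by
    intro c hc
    rw [Nat.mod_add_mod, show c + (k - 1) + 1 = c + k by omega, Nat.add_mod_right,
      Nat.mod_eq_of_lt hc]
  constructor
  · rintro rfl; rw [key1 b hb]
  · rintro rfl; rw [key2 a ha]

lemma succ_ne_pred (hk : 3 ≤ k) {a : ℕ} (ha : a < k) :
    (a + 1) % k ≠ (a + (k - 1)) % k := by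
  intro h
  rcases Nat.lt_or_ge (a + 1) k with h1 | h1
  · rw [Nat.mod_eq_of_lt h1] at h
    rcases Nat.lt_or_ge (a + (k - 1)) k with h2 | h2
    · rw [Nat.mod_eq_of_lt h2] at h; omega
    · rw [Nat.mod_eq_sub_mod h2, Nat.mod_eq_of_lt (by omega)] at h; omega
  · have ha1 : a + 1 = k := by omega
    rw [ha1, Nat.mod_self] at h
    rw [Nat.mod_eq_sub_mod (by omega), Nat.mod_eq_of_lt (by omega)] at h
    omega

end Arith

lemma inr_succ_mem (hk : 3 ≤ k) {a0 : {w : N.V // w ≠ u} ⊕ Fin k}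
    (c : (blowUp N u k vs).Walk a0 a0) (hc : c.IsCycle)
    (hall : ∀ v ∈ c.support, ∃ i : Fin k, v = Sum.inr i)
    {i : Fin k} (hi : Sum.inr i ∈ c.support) :
    Sum.inr (⟨(i.1 + 1) % k, Nat.mod_lt _ (by omega)⟩ : Fin k) ∈ c.support := by
  classical
  obtain ⟨c', hc', hiff⟩ :
      ∃ c' : (blowUp N u k vs).Walk (Sum.inr i) (Sum.inr i),
        c'.IsCycle ∧ ∀ w, w ∈ c'.support ↔ w ∈ c.support :=
    ⟨c.rotate _ hi, hc.rotate hi, fun w => mem_support_rotate_iff c hi w⟩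
  rw [← hiff]
  cases c' with
  | nil => exact absurd rfl hc'.ne_nil
  | cons h t =>
    rename_i b
    rw [SimpleGraph.Walk.cons_isCycle_iff] at hc'
    obtain ⟨ht, hes⟩ := hc'
    have hbmem : b ∈ t.support := t.start_mem_support
    have hbc : b ∈ (SimpleGraph.Walk.cons h t).support := by
      rw [SimpleGraph.Walk.support_cons]; exact List.mem_cons_of_mem _ hbmem
    obtain ⟨j, rfl⟩ := (fun v hv => hall v ((hiff v).1 hv)) b hbc
    cases htr : t.reverse with
    | nil => exact absurd rfl h.ne
    | cons h' t' =>
      rename_i b'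
      have heb' : s(Sum.inr i, b') ∈ t.edges := by
        have : s(Sum.inr i, b') ∈ t.reverse.edges := by
          rw [htr, SimpleGraph.Walk.edges_cons]; exact List.mem_cons_self
        rw [SimpleGraph.Walk.edges_reverse] at this
        exact List.mem_reverse.1 this
      have hb'mem : b' ∈ t.support := by
        have : b' ∈ t.reverse.support := by
          rw [htr, SimpleGraph.Walk.support_cons]
          exact List.mem_cons_of_mem _ t'.start_mem_support
        rwa [SimpleGraph.Walk.support_reverse, List.mem_reverse] at this
      have hb'c : b' ∈ (SimpleGraph.Walk.cons h t).support := by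
        rw [SimpleGraph.Walk.support_cons]; exact List.mem_cons_of_mem _ hb'mem
      obtain ⟨j', hj'⟩ := (fun v hv => hall v ((hiff v).1 hv)) b' hb'c
      have hjj' : j ≠ j' := by
        rintro rfl
        exact hes (hj' ▸ heb')
      have hadj1 := (adj_inr_inr N u vs hk i j).1 h
      have hadj2 := (adj_inr_inr N u vs hk i j').1 (hj' ▸ h' : (blowUp N u k vs).Adj (Sum.inr i) (Sum.inr j'))
      rcases hadj1 with h1 | h1
      · rw [SimpleGraph.Walk.support_cons]
        refine List.mem_cons_of_mem _ ?_
        have : (⟨(i.1 + 1) % k, Nat.mod_lt _ (by omega)⟩ : Fin k) = j := Fin.ext h1.symm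
        rw [this]; exact hbmem
      · rcases hadj2 with h2 | h2
        · rw [SimpleGraph.Walk.support_cons]
          refine List.mem_cons_of_mem _ ?_
          have heq : (⟨(i.1 + 1) % k, Nat.mod_lt _ (by omega)⟩ : Fin k) = j' := Fin.ext h2.symm
          rw [heq]
          exact hj' ▸ hb'mem
        · exact absurd (Fin.ext (succ_mod_inj (by omega) j.isLt j'.isLt
            (h1.symm.trans h2))) hjj'

lemma inr_full (hk : 3 ≤ k) {a0 : {w : N.V // w ≠ u} ⊕ Fin k}
    (c : (blowUp N u k vs).Walk a0 a0) (hc : c.IsCycle)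
    (hall : ∀ v ∈ c.support, ∃ i : Fin k, v = Sum.inr i) (j : Fin k) :
    Sum.inr j ∈ c.support := by
  obtain ⟨i0, ha0⟩ := hall a0 c.start_mem_support
  have hi0 : Sum.inr i0 ∈ c.support := ha0 ▸ c.start_mem_support
  have key : ∀ t : ℕ,
      Sum.inr (⟨(i0.1 + t) % k, Nat.mod_lt _ (by omega)⟩ : Fin k) ∈ c.support := by
    intro t
    induction t with
    | zero =>
      have : (⟨(i0.1 + 0) % k, Nat.mod_lt _ (by omega)⟩ : Fin k) = i0 :=
        Fin.ext (by simp [Nat.mod_eq_of_lt i0.isLt])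
      rw [this]; exact hi0
    | succ t iht =>
      have := inr_succ_mem N u vs hk c hc hall iht
      have heq : ((((i0.1 + t) % k) + 1) % k) = (i0.1 + (t + 1)) % k := by
        rw [Nat.mod_add_mod, ← Nat.add_assoc]
      convert this using 3
      · rw [heq]
  have := key (k - i0.1 + j.1)
  have heq : (i0.1 + (k - i0.1 + j.1)) % k = j.1 := by
    rw [show i0.1 + (k - i0.1 + j.1) = j.1 + k by have := i0.isLt; omega,
      Nat.add_mod_right, Nat.mod_eq_of_lt j.isLt]
  have heq2 : (⟨(i0.1 + (k - i0.1 + j.1)) % k, Nat.mod_lt _ (by omega)⟩ : Fin k) = j :=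
    Fin.ext heq
  rwa [heq2] at this

include hnb in
lemma level1' (hk : 3 ≤ k) (hinj : Function.Injective vs)
    (hnocyc : ∀ ⦃w : N.V⦄ (c : N.G.Walk w w), c.IsCycle → u ∉ c.support) :
    Level1Prop (blowUp N u k vs) := by
  have classify : ∀ {a0 : {w : N.V // w ≠ u} ⊕ Fin k}
      (c : (blowUp N u k vs).Walk a0 a0), c.IsCycle →
      (∀ v ∈ c.support, ∃ z : {w : N.V // w ≠ u}, v = Sum.inl z) ∨
      (∀ v ∈ c.support, ∃ i : Fin k, v = Sum.inr i) := by
    intro a0 c hc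
    rcases Classical.em (∀ v ∈ c.support, ∃ z : {w : N.V // w ≠ u},
        v = (Sum.inl z : {w : N.V // w ≠ u} ⊕ Fin k)) with hA | hA
    · exact Or.inl hA
    · push_neg at hA
      obtain ⟨v1, hv1, hne1⟩ := hA
      right
      intro v hv
      cases v with
      | inl z =>
        cases v1 with
        | inl z1 => exact absurd rfl (hne1 z1)
        | inr i1 => exact absurd (no_mixed_cycle N u vs hnb hinj hnocyc c hc hv hv1) id
      | inr i => exact ⟨i, rfl⟩
  intro a0 c hc w0 c' hc' hshare v
  obtain ⟨v0, hv01, hv02⟩ := hshare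
  rcases classify c hc with hA | hA <;> rcases classify c' hc' with hB | hB
  · -- both all-inl
    obtain ⟨xa, rfl⟩ := hA a0 c.start_mem_support
    obtain ⟨xb, rfl⟩ := hB w0 c'.start_mem_support
    obtain ⟨q, hq, hqs⟩ := lift_cycle N u vs c hc hA
    obtain ⟨q', hq', hqs'⟩ := lift_cycle N u vs c' hc' hB
    obtain ⟨z0, rfl⟩ := hA v0 hv01
    have hz1 : z0.1 ∈ q.support := by
      rw [hqs]; exact List.mem_map_of_mem hv01
    have hz2 : z0.1 ∈ q'.support := by
      rw [hqs']; exact List.mem_map_of_mem hv02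
    have hiff := N.level1 q hq q' hq' ⟨z0.1, hz1, hz2⟩
    have mem_iff : ∀ (d : (blowUp N u k vs).Walk (Sum.inl xa) (Sum.inl xa))
        (qd : N.G.Walk xa.1 xa.1), qd.support = d.support.map (pr N u) →
        (∀ v ∈ d.support, ∃ z : {w : N.V // w ≠ u}, v = Sum.inl z) →
        ∀ z : {w : N.V // w ≠ u}, (Sum.inl z ∈ d.support ↔ z.1 ∈ qd.support) := by
      intro d qd hds hdall z
      rw [hds]
      constructor
      · intro hm; exact List.mem_map_of_mem hm
      · intro hm
        obtain ⟨w', hw', hpw⟩ := List.mem_map.1 hm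
        have : w' = Sum.inl z := pr_injOn N u (hdall w' hw') ⟨z, rfl⟩ hpw
        rwa [← this]
    cases v with
    | inl z =>
      rw [mem_iff c q hqs hA z, hiff]
      -- goal: z.1 ∈ q'.support ↔ Sum.inl z ∈ c'.support
      exact (by
        have h2 : ∀ z : {w : N.V // w ≠ u},
            (Sum.inl z ∈ c'.support ↔ z.1 ∈ q'.support) := by
          intro z'
          rw [hqs']
          constructor
          · intro hm; exact List.mem_map_of_mem hm
          · intro hm
            obtain ⟨w', hw', hpw⟩ := List.mem_map.1 hm
            have : w' = Sum.inl z' := pr_injOn N u (hB w' hw') ⟨z', rfl⟩ hpw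
            rwa [← this]
        exact (h2 z).symm)
    | inr i =>
      constructor
      · intro hm; obtain ⟨z, hz⟩ := hA _ hm; simp at hz
      · intro hm; obtain ⟨z, hz⟩ := hB _ hm; simp at hz
  · -- c all-inl, c' all-inr : v0 in both
    obtain ⟨z0, rfl⟩ := hA v0 hv01
    obtain ⟨i0, hi0⟩ := hB _ hv02
    simp at hi0
  · obtain ⟨i0, rfl⟩ := hA v0 hv01
    obtain ⟨z0, hz0⟩ := hB _ hv02
    simp at hz0
  · -- both all-inr
    cases v with
    | inl z =>
      constructor
      · intro hm; obtain ⟨i, hz⟩ := hA _ hm; simp at hz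
      · intro hm; obtain ⟨i, hz⟩ := hB _ hm; simp at hz
    | inr i =>
      constructor
      · intro _; exact inr_full N u vs hk c' hc' hB i
      · intro _; exact inr_full N u vs hk c hc hA i

include hnb in
lemma conn' (hk : 3 ≤ k) : (blowUp N u k vs).Connected := by
  have hk0 : 0 < k := by omega
  rw [SimpleGraph.connected_iff]
  refine ⟨?_, ⟨Sum.inr ⟨0, hk0⟩⟩⟩
  have hreach_inr : ∀ i : Fin k,
      (blowUp N u k vs).Reachable (Sum.inr i) (Sum.inr ⟨0, hk0⟩) := by
    rintro ⟨m, hm⟩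
    induction m with
    | zero => rfl
    | succ m ihm =>
      have hmk : m < k := by omega
      have hadj : (blowUp N u k vs).Adj (Sum.inr ⟨m, hmk⟩) (Sum.inr ⟨m + 1, hm⟩) :=
        (adj_inr_inr N u vs hk _ _).2 (Or.inl (by simp [Nat.mod_eq_of_lt hm]))
      exact hadj.symm.reachable.trans (ihm hmk)
  have hreach_inl : ∀ x : {w : N.V // w ≠ u},
      (blowUp N u k vs).Reachable (Sum.inl x) (Sum.inr ⟨0, hk0⟩) := by
    intro x
    obtain ⟨p⟩ := N.conn.preconnected x.1 u
    have H : ∀ (n : ℕ) (w : N.V) (p : N.G.Walk w u), p.length ≤ n → ∀ (hw : w ≠ u),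
        (blowUp N u k vs).Reachable (Sum.inl ⟨w, hw⟩) (Sum.inr ⟨0, hk0⟩) := by
      intro n
      induction n with
      | zero =>
        intro w p hlen hw
        cases p with
        | nil => exact absurd rfl hw
        | cons h q => simp at hlen
      | succ n ih =>
        intro w p hlen hw
        cases p with
        | nil => exact absurd rfl hw
        | cons h q =>
          rename_i y
          by_cases hy : y = u
          · obtain ⟨i, hi⟩ := (hnb w).1 (by rw [← hy]; exact h.symm)
            have hadj : (blowUp N u k vs).Adj (Sum.inl ⟨w, hw⟩) (Sum.inr i) :=
              (adj_inl_inr N u vs _ _).2 hi.symm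
            exact hadj.reachable.trans (hreach_inr i)
          · have hadj : (blowUp N u k vs).Adj (Sum.inl ⟨w, hw⟩) (Sum.inl ⟨y, hy⟩) :=
              (adj_inl_inl N u vs _ _).2 h
            exact hadj.reachable.trans (ih y q (by simpa using Nat.succ_le_succ_iff.1 hlen) hy)
    have := H p.length x.1 p le_rfl x.2
    simpa using this
  intro a b
  have key : ∀ a, (blowUp N u k vs).Reachable a (Sum.inr ⟨0, hk0⟩) := by
    rintro (x | i)
    · exact hreach_inl x
    · exact hreach_inr i
  exact (key a).trans (key b).symm

include hnb in
lemma nb_inl (hinj : Function.Injective vs) (x : {w : N.V // w ≠ u}) :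
    ((blowUp N u k vs).neighborSet (Sum.inl x)).ncard = (N.G.neighborSet x.1).ncard := by
  have himg : pr N u '' ((blowUp N u k vs).neighborSet (Sum.inl x)) =
      N.G.neighborSet x.1 := by
    ext w
    constructor
    · rintro ⟨v, hv, rfl⟩
      cases v with
      | inl y => exact (adj_inl_inl N u vs x y).1 hv
      | inr i =>
        have hx : x.1 = vs i := (adj_inl_inr N u vs x i).1 hv
        exact ((hnb x.1).2 ⟨i, hx.symm⟩).symm
    · intro hw
      by_cases hwu : w = u
      · obtain ⟨i, hi⟩ := (hnb x.1).1 (hwu ▸ hw.symm)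
        exact ⟨Sum.inr i, (adj_inl_inr N u vs x i).2 hi.symm, hwu.symm⟩
      · exact ⟨Sum.inl ⟨w, hwu⟩, (adj_inl_inl N u vs x ⟨w, hwu⟩).2 hw, rfl⟩
  have hinj' : Set.InjOn (pr N u) ((blowUp N u k vs).neighborSet (Sum.inl x)) := by
    rintro (ya | ia) ha (yb | ib) hb hab
    · exact congrArg Sum.inl (Subtype.ext hab)
    · exact absurd hab ya.2
    · exact absurd hab.symm yb.2
    · have h1 : x.1 = vs ia := (adj_inl_inr N u vs x ia).1 ha
      have h2 : x.1 = vs ib := (adj_inl_inr N u vs x ib).1 hb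
      exact congrArg Sum.inr (hinj (h1.symm.trans h2))
  rw [← himg, Set.ncard_image_of_injOn hinj']

include hnb in
lemma nb_inr (hk : 3 ≤ k) (i : Fin k) :
    ((blowUp N u k vs).neighborSet (Sum.inr i)).ncard = 3 := by
  have hset : (blowUp N u k vs).neighborSet (Sum.inr i) =
      {Sum.inl (vs' N u vs hnb i),
       Sum.inr (⟨(i.1 + 1) % k, Nat.mod_lt _ (by omega)⟩ : Fin k),
       Sum.inr (⟨(i.1 + (k - 1)) % k, Nat.mod_lt _ (by omega)⟩ : Fin k)} := by
    ext v
    cases v with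
    | inl y =>
      simp only [SimpleGraph.mem_neighborSet, Set.mem_insert_iff, Set.mem_singleton_iff]
      rw [show ((blowUp N u k vs).Adj (Sum.inr i) (Sum.inl y)) ↔ y.1 = vs i from
        ⟨fun h => (adj_inl_inr N u vs y i).1 h.symm,
         fun h => ((adj_inl_inr N u vs y i).2 h).symm⟩]
      constructor
      · intro h
        exact Or.inl (congrArg Sum.inl (Subtype.ext h))
      · rintro (h | h | h)
        · injection h with h'; rw [h']; rfl
        · simp at h
        · simp at h
    | inr j =>
      simp only [SimpleGraph.mem_neighborSet, Set.mem_insert_iff, Set.mem_singleton_iff]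
      rw [adj_inr_inr N u vs hk i j]
      constructor
      · rintro (h | h)
        · exact Or.inr (Or.inl (congrArg Sum.inr (Fin.ext h)))
        · refine Or.inr (Or.inr (congrArg Sum.inr (Fin.ext ?_)))
          exact ((pred_iff hk i.isLt j.isLt).1 h)
      · rintro (h | h | h)
        · simp at h
        · injection h with h'
          exact Or.inl (congrArg Fin.val h')
        · injection h with h'
          refine Or.inr ((pred_iff hk i.isLt j.isLt).2 (congrArg Fin.val h'))
  rw [hset, Set.ncard_eq_three]
  refine ⟨_, _, _, by simp, by simp, ?_, rfl⟩
  intro h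
  injection h with h'
  exact succ_ne_pred hk i.isLt (congrArg Fin.val h')

set_option maxHeartbeats 2000000 in
include hnb in
lemma count' (hk : 3 ≤ k) (hinj : Function.Injective vs) :
    (blowUp N u k vs).edgeSet.ncard + Fintype.card N.V =
      N.G.edgeSet.ncard + Fintype.card ({w : N.V // w ≠ u} ⊕ Fin k) + 1 := by
  classical
  letI : DecidableRel N.G.Adj := Classical.decRel _
  letI : DecidableRel (blowUp N u k vs).Adj := Classical.decRel _
  have hdeg1 : ∀ v, (blowUp N u k vs).degree v = ((blowUp N u k vs).neighborSet v).ncard := by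
    intro v
    rw [← SimpleGraph.card_neighborSet_eq_degree, ← Nat.card_eq_fintype_card,
      Nat.card_coe_set_eq]
  have hdeg2 : ∀ v, N.G.degree v = (N.G.neighborSet v).ncard := by
    intro v
    rw [← SimpleGraph.card_neighborSet_eq_degree, ← Nat.card_eq_fintype_card,
      Nat.card_coe_set_eq]
  have hE1 : (blowUp N u k vs).edgeSet.ncard = (blowUp N u k vs).edgeFinset.card := by
    rw [SimpleGraph.edgeFinset, Set.toFinset_card, ← Nat.card_eq_fintype_card,
      Nat.card_coe_set_eq]
  have hE2 : N.G.edgeSet.ncard = N.G.edgeFinset.card := by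
    rw [SimpleGraph.edgeFinset, Set.toFinset_card, ← Nat.card_eq_fintype_card,
      Nat.card_coe_set_eq]
  have h1 := SimpleGraph.sum_degrees_eq_twice_card_edges (blowUp N u k vs)
  have h2 := SimpleGraph.sum_degrees_eq_twice_card_edges N.G
  rw [Fintype.sum_sum_type] at h1
  have hinl : ∀ x : {w : N.V // w ≠ u},
      (blowUp N u k vs).degree (Sum.inl x) = N.G.degree x.1 := fun x =>
    ((hdeg1 (Sum.inl x)).trans (nb_inl N u vs hnb hinj x)).trans (hdeg2 x.1).symm
  have hinr : ∀ i : Fin k, (blowUp N u k vs).degree (Sum.inr i) = 3 := fun i =>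
    (hdeg1 (Sum.inr i)).trans (nb_inr N u vs hnb hk i)
  rw [Finset.sum_congr rfl (fun x _ => hinl x), Finset.sum_congr rfl (fun i _ => hinr i),
    Finset.sum_const, Finset.card_univ, Fintype.card_fin, smul_eq_mul] at h1
  have hsub : ∑ x : {w : N.V // w ≠ u}, N.G.degree x.1 =
      ∑ v ∈ Finset.univ.erase u, N.G.degree v :=
    (Finset.sum_subtype (Finset.univ.erase u) (fun v => by simp) (fun v => N.G.degree v)).symm
  have hsplit : N.G.degree u + ∑ v ∈ Finset.univ.erase u, N.G.degree v =
      ∑ v, N.G.degree v :=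
    Finset.add_sum_erase Finset.univ (fun v => N.G.degree v) (Finset.mem_univ u)
  have hdegu : N.G.degree u = k := by
    rw [hdeg2 u]
    have hr : N.G.neighborSet u = Set.range vs := by
      ext w; simp [hnb w]
    rw [hr, ← Set.image_univ, Set.ncard_image_of_injective _ hinj, Set.ncard_univ,
      Nat.card_eq_fintype_card, Fintype.card_fin]
  have hcard : Fintype.card ({w : N.V // w ≠ u} ⊕ Fin k) =
      Fintype.card {w : N.V // w ≠ u} + k := by
    rw [Fintype.card_sum, Fintype.card_fin]
  have hcard2 : Fintype.card {w : N.V // w ≠ u} = Fintype.card N.V - 1 := by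
    have h := Fintype.card_subtype_compl (fun w : N.V => w = u)
    rw [Fintype.card_subtype_eq] at h
    exact h
  have hpos : 0 < Fintype.card N.V := Fintype.card_pos_iff.2 ⟨u⟩
  rw [← hE1] at h1
  rw [← hE2] at h2
  rw [hsub] at h1
  omega

end BUAux

/-- Blow-up theorem: if u is an interior vertex of the level-1 network N with
    neighbourhood enumerated by the injection vs : Fin k → V (k ≥ 3) and u lies
    on no cycle of N, then the blow-up N' of N at u is again a level-1 network
    on X (connected, leaves exactly X, interior degrees ≥ 3, level-1), and its
    number of cycles (cycle rank E − V + 1) exceeds that of N by exactly one,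
    i.e. E(N') + |V(N)| = E(N) + |V(N')| + 1. -/
theorem blowUp_level1 (N : Lvl1Net X) (u : N.V) (k : ℕ) (hk : 3 ≤ k)
    (vs : Fin k → N.V) (hinj : Function.Injective vs)
    (hnb : ∀ w : N.V, N.G.Adj u w ↔ ∃ i, vs i = w)
    (hleaf : ∀ x : X, N.leaf x ≠ u)
    (hnocyc : ∀ ⦃w : N.V⦄ (c : N.G.Walk w w), c.IsCycle → u ∉ c.support) :
    (blowUp N u k vs).Connected ∧
    (∀ x : X,
      ((blowUp N u k vs).neighborSet (Sum.inl ⟨N.leaf x, hleaf x⟩)).ncard = 1) ∧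
    (∀ p : {w : N.V // w ≠ u} ⊕ Fin k,
      ((blowUp N u k vs).neighborSet p).ncard = 1 →
        ∃ x : X, p = Sum.inl ⟨N.leaf x, hleaf x⟩) ∧
    (∀ p : {w : N.V // w ≠ u} ⊕ Fin k,
      ((blowUp N u k vs).neighborSet p).ncard = 1 ∨
        3 ≤ ((blowUp N u k vs).neighborSet p).ncard) ∧
    Level1Prop (blowUp N u k vs) ∧
    (blowUp N u k vs).edgeSet.ncard + Fintype.card N.V =
      N.G.edgeSet.ncard + Fintype.card ({w : N.V // w ≠ u} ⊕ Fin k) + 1 := by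

  refine ⟨BUAux.conn' N u vs hnb hk, ?_, ?_, ?_,
    BUAux.level1' N u vs hnb hk hinj hnocyc, BUAux.count' N u vs hnb hk hinj⟩
  · intro x
    rw [BUAux.nb_inl N u vs hnb hinj ⟨N.leaf x, hleaf x⟩]
    exact N.deg_leaf x
  · intro p hp
    cases p with
    | inl y =>
      rw [BUAux.nb_inl N u vs hnb hinj y] at hp
      obtain ⟨x, hx⟩ := N.leaf_of_deg y.1 hp
      exact ⟨x, congrArg Sum.inl (Subtype.ext hx.symm)⟩
    | inr i =>
      rw [BUAux.nb_inr N u vs hnb hk i] at hp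
      omega
  · intro p
    cases p with
    | inl y =>
      rw [BUAux.nb_inl N u vs hnb hinj y]
      exact N.deg_ge y.1
    | inr i =>
      rw [BUAux.nb_inr N u vs hnb hk i]
      exact Or.inr le_rfl
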